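/- Let M ≥ 3. Then the cross-correlation periodogram of the noisy periodic signal is an unbiased estimator of the signal's power spectrum: E[P_y(f)] − |X(f)|² = 0. -/

import Mathlib

open MeasureTheory ProbabilityTheory Complex Finset
open scoped NNReal

private lemma block_ne' {L p q s t : ℕ} (hL : 1 ≤ L) (hpq : p ≠ q) (hs : s < L) (ht : t < L) :
    p * L + s ≠ q * L + t := by
  intro h
  apply hpq
  have hp : (p * L + s) / L = p := by
    rw [mul_comm, Nat.mul_add_div (by omega)]
    simp [Nat.div_eq_of_lt hs]
  have hq : (q * L + t) / L = q := by
    rw [mul_comm, Nat.mul_add_div (by omega)]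
    simp [Nat.div_eq_of_lt ht]
  rw [← hp, ← hq, h]

private lemma gauss_int_id {v : ℝ≥0} (hv : v ≠ 0) :
    Integrable (fun x : ℝ => x) (gaussianReal 0 v) := by
  have hv' : 0 < (v : ℝ) := NNReal.coe_pos.mpr (pos_iff_ne_zero.mpr hv)
  rw [gaussianReal_of_var_ne_zero 0 hv,
    integrable_withDensity_iff (measurable_gaussianPDF 0 v)
      (ae_of_all _ fun x => by simp only [gaussianPDF_def]; exact ENNReal.ofReal_lt_top)]
  have h0 : (0 : ℝ) < (2 * (v : ℝ))⁻¹ := by positivity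
  have hI := (integrable_mul_exp_neg_mul_sq h0).const_mul ((Real.sqrt (2 * Real.pi * v))⁻¹)
  refine hI.congr (ae_of_all _ fun x => ?_)
  simp only [gaussianPDF_def]
  rw [ENNReal.toReal_ofReal (gaussianPDFReal_nonneg 0 v x)]
  simp only [gaussianPDFReal_def]
  rw [show -(x - (0:ℝ))^2 / (2 * (v:ℝ)) = -(2 * (v:ℝ))⁻¹ * x ^ 2 by ring]
  ring

private lemma gauss_integral_id {v : ℝ≥0} (hv : v ≠ 0) :
    ∫ x, x ∂(gaussianReal 0 v) = 0 := by
  have hmap : (gaussianReal 0 v).map (fun x : ℝ => -x) = gaussianReal 0 v := by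
    have h := gaussianReal_map_const_mul (μ := 0) (v := v) (-1)
    have h1 : ((fun x : ℝ => (-1 : ℝ) * x)) = (fun x : ℝ => -x) := by funext x; ring
    have h2 : (⟨(-1 : ℝ)^2, sq_nonneg _⟩ : ℝ≥0) = 1 := by ext; norm_num
    rw [h1] at h
    rw [h]
    congr 1
    · simp
    · ext; simp
  have h3 := integral_map (μ := gaussianReal 0 v) (φ := fun x : ℝ => -x)
    measurable_neg.aemeasurable (f := fun x : ℝ => x) aestronglyMeasurable_id
  rw [hmap] at h3
  have h4 : ∫ x : ℝ, -x ∂(gaussianReal 0 v) = - ∫ x : ℝ, x ∂(gaussianReal 0 v) :=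
    integral_neg _
  rw [h4] at h3
  linarith

/-- For `M ≥ 3`, the cross-correlation periodogram of an
`L`-periodic signal with additive white Gaussian noise is an unbiased estimator
of the signal's power spectrum: `E[P_y(f)] − |X(f)|² = 0`. -/
theorem ccp_unbiased_gaussian
    {Ω : Type*} [MeasurableSpace Ω] (μ : Measure Ω) [IsProbabilityMeasure μ]
    (L M : ℕ) (hL : 1 ≤ L) (hM : 3 ≤ M)
    (σ : ℝ) (hσ : 0 < σ)
    (f : ℤ) (hf : ¬ (L : ℤ) ∣ f) (hf2 : ¬ (L : ℤ) ∣ 2 * f)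
    (x : ℤ → ℝ) (hper : ∀ t : ℤ, x (t + L) = x t)
    (X : ℂ)
    (hX : X = (Real.sqrt L : ℂ)⁻¹ * ∑ t ∈ Finset.range L,
      (x t : ℂ) * Complex.exp (-2 * Real.pi * Complex.I * f * t / L))
    (n : ℕ → Ω → ℝ)
    (hindep : iIndepFun n μ)
    (hgauss : ∀ t, Measure.map (n t) μ = gaussianReal 0 ⟨σ ^ 2, sq_nonneg σ⟩)
    (N : ℕ → Ω → ℂ)
    (hN : ∀ (m : ℕ) (ω : Ω), N m ω =
      (Real.sqrt L : ℂ)⁻¹ * ∑ t ∈ Finset.range L,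
        (n ((m % M) * L + t) ω : ℂ) *
          Complex.exp (-2 * Real.pi * Complex.I * f * t / L))
    (Y : ℕ → Ω → ℂ)
    (hY : ∀ (m : ℕ) (ω : Ω), Y m ω = X + N m ω)
    (Py : Ω → ℝ)
    (hPy : ∀ ω : Ω, Py ω =
      (M : ℝ)⁻¹ * ∑ m ∈ Finset.range M,
        (Y m ω * (starRingEnd ℂ) (Y (m + 1) ω)).re) :
    (∫ ω, Py ω ∂μ) - ‖X‖ ^ 2 = 0 := by
  set v : ℝ≥0 := ⟨σ ^ 2, sq_nonneg σ⟩ with hvdef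
  have hv : v ≠ 0 := by
    intro h
    have : (σ : ℝ) ^ 2 = 0 := congrArg NNReal.toReal h
    nlinarith
  -- a.e.-measurability of the noise
  have haem : ∀ i, AEMeasurable (n i) μ := by
    intro i
    by_contra h
    have h1 := hgauss i
    rw [Measure.map_of_not_aemeasurable h] at h1
    have h2 : (gaussianReal 0 v) Set.univ = 1 := measure_univ
    rw [← h1] at h2
    simp at h2
  -- integrability and mean zero of the noise
  have hint : ∀ i, Integrable (n i) μ := by
    intro i
    have h1 : Integrable (fun x : ℝ => x) (Measure.map (n i) μ) := by
      rw [hgauss i]; exact gauss_int_id hv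
    exact (integrable_map_measure aestronglyMeasurable_id (haem i)).mp h1
  have hmean : ∀ i, ∫ ω, n i ω ∂μ = 0 := by
    intro i
    have h1 := integral_map (μ := μ) (φ := n i) (haem i) (f := fun x : ℝ => x)
      aestronglyMeasurable_id
    rw [hgauss i, gauss_integral_id hv] at h1
    exact h1.symm
  have hint2 : ∀ i j, i ≠ j → Integrable (fun ω => n i ω * n j ω) μ := by
    intro i j hij
    exact (hindep.indepFun hij).integrable_mul (hint i) (hint j)
  have hmean2 : ∀ i j, i ≠ j → ∫ ω, n i ω * n j ω ∂μ = 0 := by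
    intro i j hij
    have h := (hindep.indepFun hij).integral_mul_eq_mul_integral (haem i).aestronglyMeasurable
      (haem j).aestronglyMeasurable
    calc ∫ ω, n i ω * n j ω ∂μ = (∫ ω, n i ω ∂μ) * ∫ ω, n j ω ∂μ := h
    _ = 0 := by rw [hmean i, zero_mul]
  -- coefficients
  set c : ℕ → ℂ := fun t => (Real.sqrt L : ℂ)⁻¹ *
    Complex.exp (-2 * Real.pi * Complex.I * f * t / L) with hc
  have hNc : ∀ (m : ℕ) (ω : Ω), N m ω =
      ∑ t ∈ range L, ((n ((m % M) * L + t) ω : ℝ) : ℂ) * c t := by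
    intro m ω
    rw [hN, Finset.mul_sum]
    exact Finset.sum_congr rfl fun t _ => by rw [hc]; ring
  -- key per-window computation
  have key : ∀ m : ℕ,
      Integrable (fun ω => (Y m ω * (starRingEnd ℂ) (Y (m + 1) ω)).re) μ ∧
      ∫ ω, (Y m ω * (starRingEnd ℂ) (Y (m + 1) ω)).re ∂μ = Complex.normSq X := by
    intro m
    set p := m % M with hp
    set q := (m + 1) % M with hq
    have hpq : p ≠ q := by
      intro h
      have h1 : M ∣ m + 1 - m := (Nat.modEq_iff_dvd' (Nat.le_succ m)).mp h
      rw [Nat.add_sub_cancel_left] at h1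
      have h2 := Nat.le_of_dvd one_pos h1
      omega
    have hne : ∀ s t : ℕ, s < L → t < L → p * L + s ≠ q * L + t :=
      fun s t hs ht => block_ne' hL hpq hs ht
    -- complex-level expansion
    have hC : ∀ ω, Y m ω * (starRingEnd ℂ) (Y (m + 1) ω) =
        X * (starRingEnd ℂ) X
        + ∑ t ∈ range L, (X * (starRingEnd ℂ) (c t)) * ((n (q * L + t) ω : ℝ) : ℂ)
        + ∑ s ∈ range L, (c s * (starRingEnd ℂ) X) * ((n (p * L + s) ω : ℝ) : ℂ)
        + ∑ s ∈ range L, ∑ t ∈ range L,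
            (c s * (starRingEnd ℂ) (c t)) *
              (((n (p * L + s) ω : ℝ) : ℂ) * ((n (q * L + t) ω : ℝ) : ℂ)) := by
      intro ω
      have e1 : ∑ t ∈ range L, (X * (starRingEnd ℂ) (c t)) * ((n (q * L + t) ω : ℝ) : ℂ)
          = X * ∑ t ∈ range L, ((n (q * L + t) ω : ℝ) : ℂ) * (starRingEnd ℂ) (c t) := by
        rw [Finset.mul_sum]; exact Finset.sum_congr rfl fun t _ => by ring
      have e2 : ∑ s ∈ range L, (c s * (starRingEnd ℂ) X) * ((n (p * L + s) ω : ℝ) : ℂ)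
          = (∑ s ∈ range L, ((n (p * L + s) ω : ℝ) : ℂ) * c s) * (starRingEnd ℂ) X := by
        rw [Finset.sum_mul]; exact Finset.sum_congr rfl fun s _ => by ring
      have e3 : ∑ s ∈ range L, ∑ t ∈ range L,
            (c s * (starRingEnd ℂ) (c t)) *
              (((n (p * L + s) ω : ℝ) : ℂ) * ((n (q * L + t) ω : ℝ) : ℂ))
          = (∑ s ∈ range L, ((n (p * L + s) ω : ℝ) : ℂ) * c s) *
            (∑ t ∈ range L, ((n (q * L + t) ω : ℝ) : ℂ) * (starRingEnd ℂ) (c t)) := by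
        rw [Finset.sum_mul_sum]
        exact Finset.sum_congr rfl fun s _ => Finset.sum_congr rfl fun t _ => by ring
      rw [e1, e2, e3, hY, hY, hNc, hNc, map_add, map_sum]
      simp only [map_mul, Complex.conj_ofReal, ← hp, ← hq]
      ring
    -- real-level expansion
    have hexp : ∀ ω, (Y m ω * (starRingEnd ℂ) (Y (m + 1) ω)).re =
        Complex.normSq X
        + ∑ t ∈ range L, (X * (starRingEnd ℂ) (c t)).re * n (q * L + t) ω
        + ∑ s ∈ range L, (c s * (starRingEnd ℂ) X).re * n (p * L + s) ω
        + ∑ s ∈ range L, ∑ t ∈ range L,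
            (c s * (starRingEnd ℂ) (c t)).re * (n (p * L + s) ω * n (q * L + t) ω) := by
      intro ω
      rw [hC ω]
      simp only [Complex.add_re, Complex.re_sum]
      congr 1
      congr 1
      congr 1
      · rw [Complex.mul_conj]; exact Complex.ofReal_re _
      · exact Finset.sum_congr rfl fun t _ => by simp [Complex.mul_re]
      · exact Finset.sum_congr rfl fun s _ => by simp [Complex.mul_re]
      · refine Finset.sum_congr rfl fun s _ => Finset.sum_congr rfl fun t _ => ?_
        simp [Complex.mul_re, ← Complex.ofReal_mul]
    -- integrability of the four pieces
    have i0 : Integrable (fun _ : Ω => Complex.normSq X) μ := integrable_const _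
    have i1 : Integrable (fun ω =>
        ∑ t ∈ range L, (X * (starRingEnd ℂ) (c t)).re * n (q * L + t) ω) μ :=
      integrable_finset_sum _ fun t _ => (hint _).const_mul _
    have i2 : Integrable (fun ω =>
        ∑ s ∈ range L, (c s * (starRingEnd ℂ) X).re * n (p * L + s) ω) μ :=
      integrable_finset_sum _ fun s _ => (hint _).const_mul _
    have i3 : Integrable (fun ω => ∑ s ∈ range L, ∑ t ∈ range L,
        (c s * (starRingEnd ℂ) (c t)).re * (n (p * L + s) ω * n (q * L + t) ω)) μ :=
      integrable_finset_sum _ fun s hs => integrable_finset_sum _ fun t ht =>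
        (hint2 _ _ (hne s t (mem_range.mp hs) (mem_range.mp ht))).const_mul _
    have i01 : Integrable (fun ω => Complex.normSq X
        + ∑ t ∈ range L, (X * (starRingEnd ℂ) (c t)).re * n (q * L + t) ω) μ := i0.add i1
    have i012 : Integrable (fun ω => Complex.normSq X
        + ∑ t ∈ range L, (X * (starRingEnd ℂ) (c t)).re * n (q * L + t) ω
        + ∑ s ∈ range L, (c s * (starRingEnd ℂ) X).re * n (p * L + s) ω) μ := i01.add i2
    constructor
    · exact (i012.add i3).congr (ae_of_all _ fun ω => (hexp ω).symm)
    · rw [integral_congr_ae (ae_of_all _ hexp)]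
      rw [integral_add i012 i3, integral_add i01 i2, integral_add i0 i1]
      have s1 : ∫ ω, (∑ t ∈ range L,
          (X * (starRingEnd ℂ) (c t)).re * n (q * L + t) ω) ∂μ = 0 := by
        rw [integral_finset_sum _ fun t _ => (hint _).const_mul _]
        refine Finset.sum_eq_zero fun t _ => ?_
        rw [integral_const_mul, hmean, mul_zero]
      have s2 : ∫ ω, (∑ s ∈ range L,
          (c s * (starRingEnd ℂ) X).re * n (p * L + s) ω) ∂μ = 0 := by
        rw [integral_finset_sum _ fun s _ => (hint _).const_mul _]
        refine Finset.sum_eq_zero fun s _ => ?_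
        rw [integral_const_mul, hmean, mul_zero]
      have s3 : ∫ ω, (∑ s ∈ range L, ∑ t ∈ range L,
          (c s * (starRingEnd ℂ) (c t)).re * (n (p * L + s) ω * n (q * L + t) ω)) ∂μ
          = 0 := by
        rw [integral_finset_sum _ fun s hs => integrable_finset_sum _ fun t ht =>
          (hint2 _ _ (hne s t (mem_range.mp hs) (mem_range.mp ht))).const_mul _]
        refine Finset.sum_eq_zero fun s hs => ?_
        rw [integral_finset_sum _ fun t ht =>
          (hint2 _ _ (hne s t (mem_range.mp hs) (mem_range.mp ht))).const_mul _]
        refine Finset.sum_eq_zero fun t ht => ?_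
        rw [integral_const_mul, hmean2 _ _ (hne s t (mem_range.mp hs) (mem_range.mp ht)),
          mul_zero]
      rw [s1, s2, s3, integral_const]
      simp
  -- assemble
  have hmain : ∫ ω, Py ω ∂μ = Complex.normSq X := by
    have h1 : ∫ ω, Py ω ∂μ = ∫ ω, (M : ℝ)⁻¹ * ∑ m ∈ range M,
        (Y m ω * (starRingEnd ℂ) (Y (m + 1) ω)).re ∂μ :=
      integral_congr_ae (ae_of_all _ hPy)
    rw [h1, integral_const_mul, integral_finset_sum _ fun m _ => (key m).1]
    rw [Finset.sum_congr rfl fun m _ => (key m).2, Finset.sum_const, card_range,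
      nsmul_eq_mul, ← mul_assoc, inv_mul_cancel₀ (by positivity : (M : ℝ) ≠ 0), one_mul]
  rw [hmain, Complex.sq_norm, sub_self]
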